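/- Consider a Markov reward process on states {s₀^(1),…,s₀^(k), s₁,…,s_{T−1}} plus terminal state ∅, with uniform initial distribution on {s₀^(1),…,s₀^(k)}, deterministic transitions s₀^(i) → s₁ → s₂ → ⋯ → s_{T−1} → ∅, and independent rewards uniform on [−1,1] at each state. Then the asymptotic variance of the Monte Carlo value estimator at state s₀^(1) equals kT/3, while the asymptotic variance of the TD estimator at s₀^(1) equals (k+T−1)/3. -/

import Mathlib

/-- Deterministic transition function of the layered MRP: each starting state
`s₀⁽ⁱ⁾` (left component) moves to `s₁`, and `s_j` moves to `s_{j+1}`, with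
`s_{T-1}` moving to the terminal state (`none`). -/
def layeredStep (k T : ℕ) : (Fin k ⊕ Fin (T - 1)) → Option (Fin k ⊕ Fin (T - 1))
  | Sum.inl _ => if h : 0 < T - 1 then some (Sum.inr ⟨0, h⟩) else none
  | Sum.inr j => if h : (j : ℕ) + 1 < T - 1 then some (Sum.inr ⟨(j : ℕ) + 1, h⟩) else none

/-- The (deterministic) trajectory of the layered MRP after `t` steps from `s`,
with `none` denoting the terminal state. -/
def layeredTraj (k T : ℕ) (s : Fin k ⊕ Fin (T - 1)) (t : ℕ) :
    Option (Fin k ⊕ Fin (T - 1)) :=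
  (fun o => Option.bind o (layeredStep k T))^[t] (some s)

/-- The occupancy measure of a state under the uniform initial distribution on
the `k` starting states. -/
noncomputable def layeredOcc (k T : ℕ) (s : Fin k ⊕ Fin (T - 1)) : ℝ :=
  ∑' t : ℕ, ∑ i : Fin k,
    (1 / (k : ℝ)) * (if layeredTraj k T (Sum.inl i) t = some s then 1 else 0)

/-- The number of visits to `s` starting from a given state `start`. -/
noncomputable def layeredVisits (k T : ℕ) (start s : Fin k ⊕ Fin (T - 1)) : ℝ :=
  ∑' t : ℕ, if layeredTraj k T start t = some s then (1 : ℝ) else 0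

/-- in the layered MRP with `k` starting states, a chain of length
`T − 1`, and i.i.d. rewards uniform on `[−1,1]` (one-step variance
`σ² = (∫_{-1}^{1} x² dx)/2 = 1/3` at every state), the asymptotic MC variance
at `s₀⁽¹⁾`, namely `E[Σ_t σ²(S_t) | S₀ = s₀⁽¹⁾]/ν(s₀⁽¹⁾)`, equals `kT/3`,
while the asymptotic TD variance `Σ_{s'} E[N(s')|S₀ = s₀⁽¹⁾]² σ²(s')/ν(s')`
equals `(k + T − 1)/3`. -/
lemma iter_none (k T : ℕ) (t : ℕ) :
    (fun o => Option.bind o (layeredStep k T))^[t] none = none := by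
  induction t with
  | zero => rfl
  | succ t ih => rw [Function.iterate_succ_apply]; exact ih
lemma traj_inr (k T : ℕ) : ∀ (t j : ℕ) (hj : j < T - 1),
    layeredTraj k T (Sum.inr ⟨j, hj⟩) t =
      if h : j + t < T - 1 then some (Sum.inr ⟨j + t, h⟩) else none := by
  intro t
  induction t with
  | zero => intro j hj; simp [layeredTraj, hj]
  | succ t ih =>
    intro j hj
    rw [layeredTraj, Function.iterate_succ_apply]
    show (fun o => Option.bind o (layeredStep k T))^[t] (layeredStep k T (Sum.inr ⟨j, hj⟩)) = _
    have hstep : layeredStep k T (Sum.inr ⟨j, hj⟩)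
        = if h : j + 1 < T - 1 then some (Sum.inr ⟨j + 1, h⟩) else none := rfl
    rw [hstep]
    by_cases h1 : j + 1 < T - 1
    · rw [dif_pos h1]
      have := ih (j + 1) h1
      rw [layeredTraj] at this
      rw [this]
      by_cases h2 : j + (t + 1) < T - 1
      · rw [dif_pos (by omega : j + 1 + t < T - 1), dif_pos h2]
        simp only [Option.some.injEq, Sum.inr.injEq, Fin.mk.injEq]
        omega
      · rw [dif_neg (by omega), dif_neg h2]
    · rw [dif_neg h1, iter_none, dif_neg (by omega)]
lemma traj_inl (k T : ℕ) (i : Fin k) (t : ℕ) :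
    layeredTraj k T (Sum.inl i) (t + 1) =
      if h : t < T - 1 then some (Sum.inr ⟨t, h⟩) else none := by
  rw [layeredTraj, Function.iterate_succ_apply]
  show (fun o => Option.bind o (layeredStep k T))^[t] (layeredStep k T (Sum.inl i)) = _
  have hstep : layeredStep k T (Sum.inl i)
      = if h : 0 < T - 1 then some (Sum.inr ⟨0, h⟩) else none := rfl
  rw [hstep]
  by_cases h0 : 0 < T - 1
  · rw [dif_pos h0]
    have := traj_inr k T t 0 h0
    rw [layeredTraj] at this
    rw [this]
    simp only [Nat.zero_add]
  · rw [dif_neg h0, iter_none, dif_neg (by omega)]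
lemma visits_inl (k T : ℕ) (i i' : Fin k) :
    layeredVisits k T (Sum.inl i) (Sum.inl i') = if i' = i then 1 else 0 := by
  rw [layeredVisits, tsum_eq_single 0]
  · simp [layeredTraj, eq_comm]
  · intro t ht
    obtain ⟨t, rfl⟩ := Nat.exists_eq_succ_of_ne_zero ht
    rw [traj_inl]
    split <;> simp
lemma visits_inr (k T : ℕ) (i : Fin k) (j : Fin (T - 1)) :
    layeredVisits k T (Sum.inl i) (Sum.inr j) = 1 := by
  rw [layeredVisits, tsum_eq_single ((j : ℕ) + 1)]
  · rw [traj_inl, dif_pos j.isLt]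
    simp
  · intro t ht
    match t with
    | 0 => simp [layeredTraj]
    | Nat.succ t =>
      rw [traj_inl]
      split
      · simp only [Option.some.injEq, Sum.inr.injEq, Fin.ext_iff]
        rw [if_neg (fun h => ht (by omega))]
      · simp
lemma occ_inl (k T : ℕ) (hk : 0 < k) (i0 : Fin k) :
    layeredOcc k T (Sum.inl i0) = 1 / k := by
  rw [layeredOcc, tsum_eq_single 0]
  · simp [layeredTraj, mul_ite, Finset.sum_ite_eq]
  · intro t ht
    obtain ⟨t, rfl⟩ := Nat.exists_eq_succ_of_ne_zero ht
    apply Finset.sum_eq_zero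
    intro i _
    rw [traj_inl]
    split <;> simp
lemma occ_inr (k T : ℕ) (hk : 0 < k) (j : Fin (T - 1)) :
    layeredOcc k T (Sum.inr j) = 1 := by
  rw [layeredOcc, tsum_eq_single ((j : ℕ) + 1)]
  · have h : ∀ i : Fin k, layeredTraj k T (Sum.inl i) ((j : ℕ) + 1) = some (Sum.inr j) := by
      intro i
      rw [traj_inl, dif_pos j.isLt]
    simp only [h, if_pos rfl, ↓reduceIte, mul_one, Finset.sum_const, Finset.card_univ, Fintype.card_fin,
      nsmul_eq_mul]
    field_simp
  · intro t ht
    apply Finset.sum_eq_zero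
    intro i _
    match t with
    | 0 => simp [layeredTraj]
    | Nat.succ t =>
      rw [traj_inl]
      split
      · simp only [Option.some.injEq, Sum.inr.injEq, Fin.ext_iff]
        rw [if_neg (fun h => ht (by omega)), mul_zero]
      · simp

theorem layered_mc_td_variances (k T : ℕ) (hk : 0 < k) (hT : 1 ≤ T) :
    let σ2 : ℝ := (∫ x in (-1 : ℝ)..1, x ^ 2) / 2
    let start : Fin k ⊕ Fin (T - 1) := Sum.inl (⟨0, hk⟩ : Fin k)
    ((∑ s : Fin k ⊕ Fin (T - 1), layeredVisits k T start s * σ2) / layeredOcc k T start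
        = (k : ℝ) * (T : ℝ) / 3) ∧
    (∑ s : Fin k ⊕ Fin (T - 1),
        (layeredVisits k T start s) ^ 2 * σ2 / layeredOcc k T s
      = ((k : ℝ) + (T : ℝ) - 1) / 3) := by
  intro σ2 start
  have hσ : σ2 = 1 / 3 := by
    show (∫ x in (-1 : ℝ)..1, x ^ 2) / 2 = 1 / 3
    rw [integral_pow]
    norm_num
  have hst : start = Sum.inl (⟨0, hk⟩ : Fin k) := rfl
  have hk0 : (k : ℝ) ≠ 0 := Nat.cast_ne_zero.mpr hk.ne'
  have hT1 : ((T - 1 : ℕ) : ℝ) = (T : ℝ) - 1 := by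
    push_cast [Nat.cast_sub hT]; ring
  rw [hσ, hst]
  constructor
  · rw [Fintype.sum_sum_type, occ_inl k T hk]
    simp only [visits_inl, visits_inr, ite_mul, one_mul, zero_mul,
      Finset.sum_ite_eq, Finset.sum_ite_eq', Finset.mem_univ, if_pos, Finset.sum_const,
      Finset.card_univ, Fintype.card_fin, nsmul_eq_mul, hT1]
    field_simp
    ring
  · rw [Fintype.sum_sum_type]
    have h1 : ∀ i' : Fin k,
        (layeredVisits k T (Sum.inl ⟨0, hk⟩) (Sum.inl i')) ^ 2 * (1 / 3) /
          layeredOcc k T (Sum.inl i')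
        = if i' = ⟨0, hk⟩ then (k : ℝ) / 3 else 0 := by
      intro i'
      rw [visits_inl, occ_inl k T hk]
      split <;> field_simp <;> simp
    have h2 : ∀ j : Fin (T - 1),
        (layeredVisits k T (Sum.inl ⟨0, hk⟩) (Sum.inr j)) ^ 2 * (1 / 3) /
          layeredOcc k T (Sum.inr j) = 1 / 3 := by
      intro j
      rw [visits_inr, occ_inr k T hk]
      norm_num
    simp only [h1, h2, Finset.sum_ite_eq', Finset.mem_univ, if_pos,
      Finset.sum_const, Finset.card_univ, Fintype.card_fin, nsmul_eq_mul, hT1]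
    ring
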